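/- For all real x > 0, ln(x) = x - 1 - ∑_{k=1}^∞ 2^(k-1)·(x^(2^(-k)) - 1)^2. -/

import Mathlib

open Filter Real

theorem log_ramanujan_bradley (x : ℝ) (hx : 0 < x) :
    Real.log x =
      x - 1 - ∑' k : ℕ, (2 : ℝ) ^ k * (x ^ ((2 : ℝ) ^ (-((k : ℝ) + 1))) - 1) ^ 2 := by
  set c := Real.log x with hc
  set a : ℕ → ℝ := fun k => 2 ^ k * (x ^ ((2 : ℝ) ^ (-(k : ℝ))) - 1) with ha
  have key : ∀ k : ℕ, (2 : ℝ) ^ k * (x ^ ((2 : ℝ) ^ (-((k : ℝ) + 1))) - 1) ^ 2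
      = a k - a (k + 1) := by
    intro k
    have hy : x ^ ((2 : ℝ) ^ (-(k : ℝ))) = (x ^ ((2 : ℝ) ^ (-((k : ℝ) + 1)))) ^ 2 := by
      rw [← Real.rpow_natCast (x ^ ((2 : ℝ) ^ (-((k : ℝ) + 1)))) 2,
        ← Real.rpow_mul hx.le]
      push_cast
      rw [← Real.rpow_add_one (by norm_num : (2:ℝ) ≠ 0)]
      norm_num
    simp only [ha, hy]
    push_cast
    ring
  -- limit of a
  have hlim : Tendsto a atTop (nhds c) := by
    have hd : HasDerivAt (fun t : ℝ => Real.exp (c * t)) c 0 := by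
      have := (Real.hasDerivAt_exp (c * 0)).comp 0 ((hasDerivAt_id 0).const_mul c)
      simpa [Function.comp_def] using this
    have hslope := hasDerivAt_iff_tendsto_slope.mp hd
    have hseq : Tendsto (fun k : ℕ => (2 : ℝ) ^ (-(k : ℝ))) atTop (nhdsWithin 0 {(0:ℝ)}ᶜ) := by
      apply tendsto_nhdsWithin_of_tendsto_nhds_of_eventually_within
      · have : Tendsto (fun k : ℕ => ((2 : ℝ)⁻¹) ^ k) atTop (nhds 0) :=
          tendsto_pow_atTop_nhds_zero_of_lt_one (by norm_num) (by norm_num)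
        refine this.congr fun k => ?_
        rw [← Real.rpow_natCast ((2:ℝ)⁻¹) k, Real.inv_rpow (by norm_num),
          ← Real.rpow_neg (by norm_num)]
      · filter_upwards with k
        exact (Real.rpow_pos_of_pos (by norm_num) _).ne'
    have := hslope.comp hseq
    refine this.congr fun k => ?_
    have hk0 : (2 : ℝ) ^ (-(k : ℝ)) ≠ 0 := (Real.rpow_pos_of_pos (by norm_num) _).ne'
    simp only [Function.comp, slope_def_field, ha]
    rw [Real.rpow_def_of_pos hx]
    field_simp
    have h2 : (2:ℝ) ^ k * (2:ℝ) ^ (-(k : ℝ)) = 1 := by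
      rw [← Real.rpow_natCast (2:ℝ) k, ← Real.rpow_add (by norm_num)]
      simp
    rw [hc]
    rw [mul_zero, Real.exp_zero, mul_comm ((2:ℝ) ^ (-(k:ℝ))) (Real.log x)]
    linear_combination -(Real.exp (Real.log x * (2:ℝ) ^ (-(k:ℝ))) - 1) * h2
  have hsum : HasSum (fun k : ℕ => (2 : ℝ) ^ k * (x ^ ((2 : ℝ) ^ (-((k : ℝ) + 1))) - 1) ^ 2)
      (a 0 - c) := by
    rw [(hasSum_iff_tendsto_nat_of_nonneg (fun k => by positivity) _)]
    have : ∀ n : ℕ, ∑ i ∈ Finset.range n,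
        (2 : ℝ) ^ i * (x ^ ((2 : ℝ) ^ (-((i : ℝ) + 1))) - 1) ^ 2 = a 0 - a n := by
      intro n
      rw [← Finset.sum_range_sub' a n]
      exact Finset.sum_congr rfl fun i _ => key i
    simp only [this]
    exact tendsto_const_nhds.sub hlim
  have ha0 : a 0 = x - 1 := by
    simp [ha]
  rw [hsum.tsum_eq, ha0]
  ring
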